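/- Let X and Y be Polish, μ ∈ P(X), ν ∈ P(Y), and c : X × Y → [0,∞) continuous with T_c(μ,ν) < ∞. Let supp μ = ⋃_{i∈I} X_i and supp ν = ⋃_{j∈J} Y_j be decompositions into connected components with I and J at most countable, and assume that every Y_j with ν(Y_j) > 0 consists of a single point. If there exists a non-degenerate optimal transport plan π ∈ C(μ,ν) such that for every i ∈ I with μ(X_i) > 0 the X_i-restricted Kantorovich potentials S_{c_{X_i}}(μ_{X_i}, ν_{X_i}) are almost surely unique, then the Kantorovich potentials S_c(μ,ν) are almost surely unique, i.e., for all f₁, f₂ ∈ S_c(μ,ν) the difference f₁ − f₂ is μ-almost surely constant. -/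

import Mathlib

open MeasureTheory Filter Set Topology
open scoped ENNReal NNReal Manifold

noncomputable section

/-- The topological support of a Borel measure: points all of whose open
neighborhoods have positive measure. -/
def msupport {X : Type*} [TopologicalSpace X] [MeasurableSpace X]
    (μ : Measure X) : Set X :=
  {x | ∀ U : Set X, IsOpen U → x ∈ U → 0 < μ U}

/-- `π` is a coupling (transport plan) between `μ` and `ν`. -/
def IsCoupling {X Y : Type*} [MeasurableSpace X] [MeasurableSpace Y]
    (π : Measure (X × Y)) (μ : Measure X) (ν : Measure Y) : Prop :=
  π.map Prod.fst = μ ∧ π.map Prod.snd = ν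

/-- The optimal transport cost `T_c(μ, ν)`. -/
def transportCost {X Y : Type*} [MeasurableSpace X] [MeasurableSpace Y]
    (c : X → Y → ℝ) (μ : Measure X) (ν : Measure Y) : ℝ≥0∞ :=
  ⨅ (π : Measure (X × Y)) (_ : IsCoupling π μ ν),
    ∫⁻ p, ENNReal.ofReal (c p.1 p.2) ∂π

/-- `π` is an optimal transport plan between `μ` and `ν` for the cost `c`. -/
def IsOptimalPlan {X Y : Type*} [MeasurableSpace X] [MeasurableSpace Y]
    (c : X → Y → ℝ) (μ : Measure X) (ν : Measure Y) (π : Measure (X × Y)) : Prop :=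
  IsCoupling π μ ν ∧
    ∫⁻ p, ENNReal.ofReal (c p.1 p.2) ∂π = transportCost c μ ν

/-- The `c`-transform of a function `f : X → ℝ ∪ {-∞}`, namely
`f^c(y) = inf_x (c(x,y) - f(x))`. -/
def cTransform {X Y : Type*} (c : X → Y → ℝ) (f : X → EReal) : Y → EReal :=
  fun y => ⨅ x, ((c x y : ℝ) : EReal) - f x

/-- The `c`-transform of a function `g : Y → ℝ ∪ {-∞}`, namely
`g^c(x) = inf_y (c(x,y) - g(y))`. -/
def cTransformY {X Y : Type*} (c : X → Y → ℝ) (g : Y → EReal) : X → EReal :=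
  fun x => ⨅ y, ((c x y : ℝ) : EReal) - g y

/-- `f : X → ℝ ∪ {-∞}` is `c`-concave on `X`: it is the `c`-transform of some
`g : Y → ℝ ∪ {-∞}` and is not identically `-∞`. -/
def CConcave {X Y : Type*} (c : X → Y → ℝ) (f : X → EReal) : Prop :=
  (∃ g : Y → EReal, (∀ y, g y ≠ ⊤) ∧ f = cTransformY c g) ∧
    (∀ x, f x ≠ ⊤) ∧ (∃ x, f x ≠ ⊥)

/-- The `c`-subdifferential `∂_c f = {(x,y) | f(x) + f^c(y) = c(x,y)}`. -/
def cSubdiff {X Y : Type*} (c : X → Y → ℝ) (f : X → EReal) : Set (X × Y) :=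
  {p | f p.1 + cTransform c f p.2 = ((c p.1 p.2 : ℝ) : EReal)}

/-- `f` is a (generalized) Kantorovich potential for `(c, μ, ν)`: it is
`c`-concave and satisfies `f ⊕ f^c = c` almost surely with respect to every
optimal transport plan (which, for `T_c(μ,ν) < ∞`, is equivalent to
`∫ (f ⊕ f^c) dπ = T_c(μ,ν)` for every optimal `π`, since `f ⊕ f^c ≤ c`). -/
def IsKantorovichPotential {X Y : Type*} [MeasurableSpace X] [MeasurableSpace Y]
    (c : X → Y → ℝ) (μ : Measure X) (ν : Measure Y) (f : X → EReal) : Prop :=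
  CConcave c f ∧
    ∀ π : Measure (X × Y), IsOptimalPlan c μ ν π →
      ∀ᵐ p ∂π, f p.1 + cTransform c f p.2 = ((c p.1 p.2 : ℝ) : EReal)

/-- The plan `π` induces regularity on `U` with respect to the compact set `K`. -/
def InducesRegularityOn {X Y : Type*} [TopologicalSpace X] [TopologicalSpace Y]
    [MeasurableSpace X] [MeasurableSpace Y]
    (π : Measure (X × Y)) (U : Set X) (K : Set Y) : Prop :=
  IsCompact K ∧
    (Prod.fst '' msupport π) ∩ U = Prod.fst '' (msupport π ∩ (U ×ˢ K))

/-- The plan `π` induces regularity at the point `x ∈ supp μ`: it induces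
regularity on some relatively open neighborhood `U ⊆ supp μ` of `x`. -/
def InducesRegularityAt {X Y : Type*} [TopologicalSpace X] [TopologicalSpace Y]
    [MeasurableSpace X] [MeasurableSpace Y]
    (π : Measure (X × Y)) (μ : Measure X) (x : X) : Prop :=
  ∃ U : Set X, x ∈ U ∧ (∃ V : Set X, IsOpen V ∧ U = V ∩ msupport μ) ∧
    ∃ K : Set Y, InducesRegularityOn π U K

/-- `F` is a decomposition of the set `S` into its connected components. -/
def IsComponentDecomp {X : Type*} [TopologicalSpace X] {ι : Type*}
    (S : Set X) (F : ι → Set X) : Prop :=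
  (⋃ i, F i) = S ∧ Pairwise (fun i j => Disjoint (F i) (F j)) ∧
    ∀ i, ∃ x ∈ S, F i = connectedComponentIn S x

/-- A transport plan `π` is degenerate (with respect to decompositions `F`, `G`
of the supports of `μ` and `ν` into connected components). -/
def IsDegenerate {X Y : Type*} [MeasurableSpace X] [MeasurableSpace Y] {ι κ : Type*}
    (F : ι → Set X) (G : κ → Set Y) (μ : Measure X) (ν : Measure Y)
    (π : Measure (X × Y)) : Prop :=
  ∃ (I' : Set ι) (J' : Set κ),
    0 < (∑' i : I', μ (F i.1)) ∧
    (∑' i : I', μ (F i.1)) = (∑' i : I', ∑' j : J', π (F i.1 ×ˢ G j.1)) ∧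
    (∑' i : I', ∑' j : J', π (F i.1 ×ˢ G j.1)) = (∑' j : J', ν (G j.1)) ∧
    (∑' j : J', ν (G j.1)) < 1

end

/-! ### Auxiliary lemmas -/

lemma isClosed_cci {X : Type*} [TopologicalSpace X] {s : Set X} (hs : IsClosed s) (x : X) :
    IsClosed (connectedComponentIn s x) := by
  by_cases h : x ∈ s
  · rw [connectedComponentIn_eq_image h]
    exact (hs.isClosedEmbedding_subtypeVal.isClosedMap _ isClosed_connectedComponent)
  · rw [connectedComponentIn_eq_empty h]; exact isClosed_empty

lemma isClosed_msupport' {X : Type*} [TopologicalSpace X] [MeasurableSpace X]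
    (μ : MeasureTheory.Measure X) : IsClosed (msupport μ) := by
  rw [← isOpen_compl_iff, isOpen_iff_forall_mem_open]
  intro x hx
  simp only [msupport, mem_compl_iff, mem_setOf_eq, not_forall] at hx
  obtain ⟨U, hU, hxU, hUμ⟩ := hx
  refine ⟨U, fun y hy => ?_, hU, hxU⟩
  simp only [msupport, mem_compl_iff, mem_setOf_eq, not_forall]
  exact ⟨U, hU, hy, hUμ⟩

lemma msupport_compl_null {X : Type*} [TopologicalSpace X] [MeasurableSpace X]
    [SecondCountableTopology X] (μ : MeasureTheory.Measure X) : μ (msupport μ)ᶜ = 0 := by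
  obtain ⟨B, hBc, -, hB⟩ := TopologicalSpace.exists_countable_basis X
  have hcover : (msupport μ)ᶜ ⊆ ⋃₀ {b ∈ B | μ b = 0} := by
    intro x hx
    simp only [msupport, mem_compl_iff, mem_setOf_eq, not_forall] at hx
    obtain ⟨U, hU, hxU, hUμ⟩ := hx
    obtain ⟨b, hbB, hxb, hbU⟩ := hB.exists_subset_of_mem_open hxU hU
    refine ⟨b, ⟨hbB, le_antisymm (le_of_le_of_eq (measure_mono hbU) (by simpa using hUμ)) (zero_le)⟩, hxb⟩
  refine le_antisymm (le_trans (measure_mono hcover) ?_) (zero_le)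
  rw [(measure_sUnion_null_iff (hBc.mono (sep_subset _ _))).2 (fun t ht => ht.2)]

lemma exists_mem_good {α : Type*} [MeasurableSpace α] (μ : MeasureTheory.Measure α)
    {s : Set α} {t : α → Prop} (hs : μ s ≠ 0) (ht : ∀ᵐ x ∂μ, t x) :
    ∃ x ∈ s, t x := by
  have h1 : μ {x | ¬ t x} = 0 := ht
  have h2 : μ (s ∩ {x | t x}) ≠ 0 := by
    intro h0
    apply hs
    have : s ⊆ (s ∩ {x | t x}) ∪ {x | ¬ t x} := by
      intro x hx
      by_cases hxt : t x
      · exact Or.inl ⟨hx, hxt⟩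
      · exact Or.inr hxt
    exact le_antisymm (le_trans (measure_mono this)
      (le_trans (measure_union_le _ _) (by rw [h0, h1, add_zero]))) (zero_le)
  obtain ⟨x, hx⟩ := nonempty_of_measure_ne_zero h2
  exact ⟨x, hx.1, hx.2⟩

lemma coupling_fst {X Y : Type*} [MeasurableSpace X] [MeasurableSpace Y]
    {π : MeasureTheory.Measure (X × Y)} {μ : MeasureTheory.Measure X} {ν : MeasureTheory.Measure Y}
    (h : IsCoupling π μ ν) {s : Set X} (hs : MeasurableSet s) :
    π (s ×ˢ (univ : Set Y)) = μ s := by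
  rw [← h.1, MeasureTheory.Measure.map_apply measurable_fst hs, ← Set.prod_univ]

lemma coupling_snd {X Y : Type*} [MeasurableSpace X] [MeasurableSpace Y]
    {π : MeasureTheory.Measure (X × Y)} {μ : MeasureTheory.Measure X} {ν : MeasureTheory.Measure Y}
    (h : IsCoupling π μ ν) {t : Set Y} (ht : MeasurableSet t) :
    π ((univ : Set X) ×ˢ t) = ν t := by
  rw [← h.2, MeasureTheory.Measure.map_apply measurable_snd ht, ← Set.univ_prod]

section RestrictPotential

variable {X Y : Type*} [MeasurableSpace X] [MeasurableSpace Y]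
  {μ : MeasureTheory.Measure X} {ν : MeasureTheory.Measure Y} {c : X → Y → ℝ}
  {π : MeasureTheory.Measure (X × Y)} {S : Set X} {f : X → EReal}

open MeasureTheory

lemma restrict_kantorovich (hπ : IsOptimalPlan c μ ν π)
    (hS : MeasurableSet S) (hm0 : μ S ≠ 0) (hm1 : μ S ≠ ⊤)
    (hf : IsKantorovichPotential c μ ν f) :
    IsKantorovichPotential (fun (x : ↥S) (y : Y) => c x.1 y)
      ((μ S)⁻¹ • Measure.comap Subtype.val μ)
      ((μ S)⁻¹ • Measure.map Prod.snd (π.restrict (S ×ˢ Set.univ)))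
      (fun x => f x.1) := by
  classical
  have hval : MeasurableEmbedding (Subtype.val : ↥S → X) := MeasurableEmbedding.subtype_coe hS
  have he : MeasurableEmbedding (fun q : ↥S × Y => ((q.1 : X), q.2)) :=
    hval.prodMap MeasurableEmbedding.id
  set e : ↥S × Y → X × Y := fun q => ((q.1 : X), q.2) with he_def
  set πA : Measure (X × Y) := π.restrict (S ×ˢ (Set.univ : Set Y)) with hπA_def
  have hSA : MeasurableSet (S ×ˢ (Set.univ : Set Y)) := hS.prod MeasurableSet.univ
  have hπS : π (S ×ˢ (Set.univ : Set Y)) = μ S := coupling_fst hπ.1 hS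
  have hre : Set.range e = S ×ˢ (Set.univ : Set Y) := by
    ext ⟨x, y⟩
    constructor
    · rintro ⟨⟨a, b⟩, h⟩; rw [← h]; exact ⟨a.2, trivial⟩
    · rintro ⟨hx, -⟩; exact ⟨⟨⟨x, hx⟩, y⟩, rfl⟩
  have h1 : Measure.map e (Measure.comap e πA) = πA := by
    rw [he.map_comap, hre, hπA_def, Measure.restrict_restrict hSA, Set.inter_self]
  have hfst : Measure.map Prod.fst (Measure.comap e πA) = Measure.comap Subtype.val μ := by
    ext s hs
    rw [Measure.map_apply measurable_fst hs, he.comap_apply, hval.comap_apply]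
    have himg : e '' (Prod.fst ⁻¹' s) = (Subtype.val '' s) ×ˢ (Set.univ : Set Y) := by
      ext ⟨x, y⟩
      constructor
      · rintro ⟨⟨a, b⟩, ha, h⟩; rw [← h]; exact ⟨⟨a, ha, rfl⟩, trivial⟩
      · rintro ⟨⟨a, ha, rfl⟩, -⟩; exact ⟨⟨a, y⟩, ha, rfl⟩
    rw [himg]
    have hms : MeasurableSet (Subtype.val '' s) := hval.measurableSet_image.2 hs
    have hsub : (Subtype.val '' s) ⊆ S := by rintro x ⟨a, -, rfl⟩; exact a.2
    rw [hπA_def, Measure.restrict_apply (hms.prod MeasurableSet.univ)]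
    have : (Subtype.val '' s) ×ˢ (Set.univ : Set Y) ∩ S ×ˢ (Set.univ : Set Y)
        = (Subtype.val '' s) ×ˢ (Set.univ : Set Y) := by
      rw [Set.prod_inter_prod, Set.inter_univ, Set.inter_eq_self_of_subset_left hsub]
    rw [this, coupling_fst hπ.1 hms]
  have hsnd : Measure.map Prod.snd (Measure.comap e πA) = Measure.map Prod.snd πA := by
    ext t ht
    rw [Measure.map_apply measurable_snd ht, Measure.map_apply measurable_snd ht, he.comap_apply]
    have himg : e '' (Prod.snd ⁻¹' t) = S ×ˢ t := by
      ext ⟨x, y⟩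
      constructor
      · rintro ⟨⟨a, b⟩, ha, h⟩; rw [← h]; exact ⟨a.2, ha⟩
      · rintro ⟨hx, hy⟩; exact ⟨⟨⟨x, hx⟩, y⟩, hy, rfl⟩
    rw [himg, hπA_def, Measure.restrict_apply (hS.prod ht),
      Measure.restrict_apply (measurable_snd ht)]
    congr 1
    ext ⟨x, y⟩
    simp [Set.mem_prod, and_comm]
  set m : ℝ≥0∞ := μ S with hm_def
  set μS : Measure ↥S := m⁻¹ • Measure.comap Subtype.val μ with hμS_def
  set νS : Measure Y := m⁻¹ • Measure.map Prod.snd πA with hνS_def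
  set ρ : Measure (↥S × Y) := m⁻¹ • Measure.comap e πA with hρ_def
  have hρcpl : IsCoupling ρ μS νS := by
    constructor
    · rw [hρ_def, Measure.map_smul, hfst]
    · rw [hρ_def, Measure.map_smul, hsnd]
  have hcostρ : (∫⁻ q, ENNReal.ofReal (c (q.1 : X) q.2) ∂ρ)
      = m⁻¹ * ∫⁻ p, ENNReal.ofReal (c p.1 p.2) ∂πA := by
    rw [hρ_def, lintegral_smul_measure]
    congr 1
    have h2 := he.lintegral_map (μ := Measure.comap e πA)
      (fun p : X × Y => ENNReal.ofReal (c p.1 p.2))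
    rw [h1] at h2
    exact h2.symm
  obtain ⟨⟨⟨g, hgtop, hfg⟩, hftop, -⟩, hfae⟩ := hf
  constructor
  · -- CConcave
    refine ⟨⟨g, hgtop, ?_⟩, fun x => hftop x.1, ?_⟩
    · funext x
      rw [hfg]
      rfl
    · -- nontriviality
      have hae := hfae π hπ
      obtain ⟨p, hpS, hpgood⟩ := exists_mem_good π (s := S ×ˢ (Set.univ : Set Y))
        (by rw [hπS]; exact hm0) hae
      refine ⟨⟨p.1, hpS.1⟩, fun hbot => ?_⟩
      simp only at hbot
      rw [hbot, EReal.bot_add] at hpgood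
      exact (EReal.bot_ne_coe (c p.1 p.2)) hpgood
  · -- for every optimal plan of the restricted problem
    intro π' hπ'
    set π'' : Measure (X × Y) :=
      π.restrict ((S ×ˢ (Set.univ : Set Y))ᶜ) + m • Measure.map e π' with hπ''_def
    have hfste : (Prod.fst : X × Y → X) ∘ e = Subtype.val ∘ (Prod.fst : ↥S × Y → ↥S) := rfl
    have hsnde : (Prod.snd : X × Y → Y) ∘ e = (Prod.snd : ↥S × Y → Y) := rfl
    have hcompl : (S ×ˢ (Set.univ : Set Y))ᶜ = Prod.fst ⁻¹' Sᶜ := by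
      ext p; simp [Set.mem_prod]
    have hcancel : m • (m⁻¹ • (Measure.comap (Subtype.val : ↥S → X) μ).map Subtype.val)
        = μ.restrict S := by
      rw [smul_smul, ENNReal.mul_inv_cancel hm0 hm1, one_smul, hval.map_comap,
        Subtype.range_coe]
    have hcpl'' : IsCoupling π'' μ ν := by
      constructor
      · rw [hπ''_def, Measure.map_add _ _ measurable_fst, Measure.map_smul,
          Measure.map_map measurable_fst he.measurable, hfste,
          ← Measure.map_map hval.measurable measurable_fst, hπ'.1.1, hμS_def,
          Measure.map_smul, ← smul_assoc, smul_eq_mul, hm_def,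
          ENNReal.mul_inv_cancel hm0 hm1, one_smul, hval.map_comap, Subtype.range_coe,
          hcompl, ← Measure.restrict_map measurable_fst hS.compl, hπ.1.1,
          Measure.restrict_compl_add_restrict hS]
      · rw [hπ''_def, Measure.map_add _ _ measurable_snd, Measure.map_smul,
          Measure.map_map measurable_snd he.measurable, hsnde, hπ'.1.2, hνS_def,
          ← smul_assoc, smul_eq_mul, hm_def, ENNReal.mul_inv_cancel hm0 hm1, one_smul]
        rw [hπA_def, ← Measure.map_add _ _ measurable_snd,
          Measure.restrict_compl_add_restrict hSA, hπ.1.2]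
    have hcost'' : (∫⁻ p, ENNReal.ofReal (c p.1 p.2) ∂π'') = transportCost c μ ν := by
      have hub : (∫⁻ p, ENNReal.ofReal (c p.1 p.2) ∂π'') ≤ transportCost c μ ν := by
        rw [hπ''_def, lintegral_add_measure, lintegral_smul_measure,
          he.lintegral_map (fun p : X × Y => ENNReal.ofReal (c p.1 p.2))]
        have hopt' : (∫⁻ q, ENNReal.ofReal (c ((q.1 : ↥S) : X) q.2) ∂π')
            ≤ m⁻¹ * ∫⁻ p, ENNReal.ofReal (c p.1 p.2) ∂πA := by
          rw [hπ'.2, ← hcostρ]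
          exact iInf_le_of_le ρ (iInf_le _ hρcpl)
        calc (∫⁻ p, ENNReal.ofReal (c p.1 p.2) ∂π.restrict ((S ×ˢ (Set.univ : Set Y))ᶜ))
              + m * ∫⁻ q, ENNReal.ofReal (c ((q.1 : ↥S) : X) q.2) ∂π'
            ≤ (∫⁻ p, ENNReal.ofReal (c p.1 p.2) ∂π.restrict ((S ×ˢ (Set.univ : Set Y))ᶜ))
              + m * (m⁻¹ * ∫⁻ p, ENNReal.ofReal (c p.1 p.2) ∂πA) := by
              gcongr
          _ = (∫⁻ p, ENNReal.ofReal (c p.1 p.2) ∂π.restrict ((S ×ˢ (Set.univ : Set Y))ᶜ))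
              + ∫⁻ p, ENNReal.ofReal (c p.1 p.2) ∂πA := by
              rw [← mul_assoc, ENNReal.mul_inv_cancel hm0 hm1, one_mul]
          _ = ∫⁻ p, ENNReal.ofReal (c p.1 p.2) ∂π := by
              rw [← lintegral_add_measure, hπA_def, Measure.restrict_compl_add_restrict hSA]
          _ = transportCost c μ ν := hπ.2
      exact le_antisymm hub (iInf_le_of_le π'' (iInf_le _ hcpl''))
    have hae'' := hfae π'' ⟨hcpl'', hcost''⟩
    have h5 : ∀ᵐ p ∂(Measure.map e π'),
        f p.1 + cTransform c f p.2 = ((c p.1 p.2 : ℝ) : EReal) := by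
      have hle : m • Measure.map e π' ≤ π'' := by
        rw [hπ''_def]; exact Measure.le_add_left le_rfl
      exact (Measure.ae_ennreal_smul_measure_iff hm0).1 (hae''.filter_mono (ae_mono hle))
    have h6 : ∀ᵐ q ∂π', f ((q.1 : ↥S) : X) + cTransform c f q.2
        = ((c ((q.1 : ↥S) : X) q.2 : ℝ) : EReal) := he.ae_map_iff.1 h5
    filter_upwards [h6] with q hq
    have hAtop : f ((q.1 : ↥S) : X) ≠ ⊤ := hftop _
    have hAbot : f ((q.1 : ↥S) : X) ≠ ⊥ := by
      intro h
      rw [h, EReal.bot_add] at hq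
      exact EReal.bot_ne_coe _ hq
    obtain ⟨a, ha⟩ : ∃ a : ℝ, f ((q.1 : ↥S) : X) = (a : EReal) :=
      ⟨(f ((q.1 : ↥S) : X)).toReal, (EReal.coe_toReal hAtop hAbot).symm⟩
    have hBbot : cTransform c f q.2 ≠ ⊥ := by
      intro h
      rw [ha, h, EReal.add_bot] at hq
      exact EReal.bot_ne_coe _ hq
    have hBtop : cTransform c f q.2 ≠ ⊤ := by
      intro h
      rw [ha, h, EReal.coe_add_top] at hq
      exact EReal.top_ne_coe _ hq
    obtain ⟨b, hb⟩ : ∃ b : ℝ, cTransform c f q.2 = (b : EReal) :=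
      ⟨(cTransform c f q.2).toReal, (EReal.coe_toReal hBtop hBbot).symm⟩
    have hab : a + b = c ((q.1 : ↥S) : X) q.2 := by
      rw [ha, hb, ← EReal.coe_add] at hq
      exact_mod_cast hq
    have h7 : cTransform (fun (x : ↥S) (y : Y) => c (x : X) y) (fun x : ↥S => f (x : X)) q.2
        = (b : EReal) := by
      apply le_antisymm
      · have h8 : cTransform (fun (x : ↥S) (y : Y) => c (x : X) y) (fun x : ↥S => f (x : X)) q.2
            ≤ ((c ((q.1 : ↥S) : X) q.2 : ℝ) : EReal) - f ((q.1 : ↥S) : X) :=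
          iInf_le _ q.1
        rw [ha, ← hab] at h8
        calc cTransform (fun (x : ↥S) (y : Y) => c (x : X) y) (fun x : ↥S => f (x : X)) q.2
            ≤ ((a + b : ℝ) : EReal) - (a : EReal) := h8
          _ = (b : EReal) := by
              rw [← EReal.coe_sub]
              norm_num
      · rw [← hb]
        exact le_iInf fun x' =>
          iInf_le (fun x : X => ((c x q.2 : ℝ) : EReal) - f x) (x' : X)
    show f ((q.1 : ↥S) : X)
        + cTransform (fun (x : ↥S) (y : Y) => c (x : X) y) (fun x : ↥S => f (x : X)) q.2
        = ((c ((q.1 : ↥S) : X) q.2 : ℝ) : EReal)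
    rw [h7, ha, ← EReal.coe_add, hab]

end RestrictPotential

lemma ereal_link {u₁ u₂ v₁ v₂ t : EReal} {r : ℝ}
    (h1 : u₁ + v₁ = (r : EReal)) (h2 : u₂ + v₂ = (r : EReal)) (h3 : u₁ = u₂ + t)
    (hu₁ : u₁ ≠ ⊤) (hu₂ : u₂ ≠ ⊤) : t = v₂ - v₁ := by
  have hu₁b : u₁ ≠ ⊥ := fun h => by rw [h, EReal.bot_add] at h1; exact EReal.bot_ne_coe r h1
  have hu₂b : u₂ ≠ ⊥ := fun h => by rw [h, EReal.bot_add] at h2; exact EReal.bot_ne_coe r h2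
  obtain ⟨a₁, ha₁⟩ : ∃ a : ℝ, u₁ = (a : EReal) := ⟨u₁.toReal, (EReal.coe_toReal hu₁ hu₁b).symm⟩
  obtain ⟨a₂, ha₂⟩ : ∃ a : ℝ, u₂ = (a : EReal) := ⟨u₂.toReal, (EReal.coe_toReal hu₂ hu₂b).symm⟩
  subst ha₁; subst ha₂
  have hv₁b : v₁ ≠ ⊥ := fun h => by rw [h, EReal.add_bot] at h1; exact EReal.bot_ne_coe r h1
  have hv₁t : v₁ ≠ ⊤ := fun h => by rw [h, EReal.coe_add_top] at h1; exact EReal.top_ne_coe r h1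
  have hv₂b : v₂ ≠ ⊥ := fun h => by rw [h, EReal.add_bot] at h2; exact EReal.bot_ne_coe r h2
  have hv₂t : v₂ ≠ ⊤ := fun h => by rw [h, EReal.coe_add_top] at h2; exact EReal.top_ne_coe r h2
  obtain ⟨b₁, hb₁⟩ : ∃ x : ℝ, v₁ = (x : EReal) := ⟨v₁.toReal, (EReal.coe_toReal hv₁t hv₁b).symm⟩
  obtain ⟨b₂, hb₂⟩ : ∃ x : ℝ, v₂ = (x : EReal) := ⟨v₂.toReal, (EReal.coe_toReal hv₂t hv₂b).symm⟩
  subst hb₁; subst hb₂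
  have htb : t ≠ ⊥ := fun h => by rw [h, EReal.add_bot] at h3; exact EReal.coe_ne_bot a₁ h3
  have htt : t ≠ ⊤ := fun h => by rw [h, EReal.coe_add_top] at h3; exact EReal.coe_ne_top a₁ h3
  obtain ⟨τ, hτ⟩ : ∃ x : ℝ, t = (x : EReal) := ⟨t.toReal, (EReal.coe_toReal htt htb).symm⟩
  subst hτ
  rw [← EReal.coe_add] at h1 h2 h3
  have e1 : a₁ + b₁ = r := by exact_mod_cast h1
  have e2 : a₂ + b₂ = r := by exact_mod_cast h2
  have e3 : a₁ = a₂ + τ := by exact_mod_cast h3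
  rw [← EReal.coe_sub]
  norm_cast
  linarith

/-- **Corollary, countable case 2: singleton components in Y.** -/
theorem stmt9 {X Y : Type*}
    [TopologicalSpace X] [PolishSpace X] [MeasurableSpace X] [BorelSpace X]
    [TopologicalSpace Y] [PolishSpace Y] [MeasurableSpace Y] [BorelSpace Y]
    {ι κ : Type*} [Countable ι] [Countable κ]
    (μ : Measure X) (ν : Measure Y) [IsProbabilityMeasure μ] [IsProbabilityMeasure ν]
    (c : X → Y → ℝ) (hc0 : ∀ x y, 0 ≤ c x y)
    (hccont : Continuous fun p : X × Y => c p.1 p.2)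
    (hT : transportCost c μ ν < ⊤)
    (F : ι → Set X) (G : κ → Set Y)
    (hF : IsComponentDecomp (msupport μ) F)
    (hG : IsComponentDecomp (msupport ν) G)
    (hsing : ∀ j : κ, 0 < ν (G j) → ∃ y : Y, G j = {y})
    (π : Measure (X × Y)) (hπopt : IsOptimalPlan c μ ν π)
    (hπnd : ¬ IsDegenerate F G μ ν π)
    (huniq : ∀ i : ι, 0 < μ (F i) → ∀ f g : ↥(F i) → EReal,
      IsKantorovichPotential (fun (x : ↥(F i)) (y : Y) => c x.1 y)
        ((μ (F i))⁻¹ • Measure.comap Subtype.val μ)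
        ((μ (F i))⁻¹ • Measure.map Prod.snd (π.restrict (F i ×ˢ Set.univ))) f →
      IsKantorovichPotential (fun (x : ↥(F i)) (y : Y) => c x.1 y)
        ((μ (F i))⁻¹ • Measure.comap Subtype.val μ)
        ((μ (F i))⁻¹ • Measure.map Prod.snd (π.restrict (F i ×ˢ Set.univ))) g →
      ∃ a : EReal, ∀ᵐ x ∂((μ (F i))⁻¹ • Measure.comap (Subtype.val : ↥(F i) → X) μ),
        f x = g x + a)
    (f₁ f₂ : X → EReal)
    (hf₁ : IsKantorovichPotential c μ ν f₁)
    (hf₂ : IsKantorovichPotential c μ ν f₂) :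
    ∃ a : EReal, ∀ᵐ x ∂μ, f₁ x = f₂ x + a := by
  classical
  -- basic measurability facts
  have hFc : ∀ i, IsClosed (F i) := by
    intro i
    obtain ⟨x, -, hFi⟩ := hF.2.2 i
    rw [hFi]
    exact isClosed_cci (isClosed_msupport' μ) x
  have hGc : ∀ j, IsClosed (G j) := by
    intro j
    obtain ⟨y, -, hGj⟩ := hG.2.2 j
    rw [hGj]
    exact isClosed_cci (isClosed_msupport' ν) y
  have hFm : ∀ i, MeasurableSet (F i) := fun i => (hFc i).measurableSet
  have hGm : ∀ j, MeasurableSet (G j) := fun j => (hGc j).measurableSet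
  have hμfull : μ (⋃ i, F i) = 1 := by
    rw [hF.1]
    rw [← prob_compl_eq_zero_iff (isClosed_msupport' μ).measurableSet]
    exact msupport_compl_null μ
  have hνfull : ν (⋃ j, G j) = 1 := by
    rw [hG.1]
    rw [← prob_compl_eq_zero_iff (isClosed_msupport' ν).measurableSet]
    exact msupport_compl_null ν
  have hμcompl : μ (⋃ i, F i)ᶜ = 0 := by
    rw [prob_compl_eq_zero_iff (MeasurableSet.iUnion hFm)]
    exact hμfull
  have hνcompl : ν (⋃ j, G j)ᶜ = 0 := by
    rw [prob_compl_eq_zero_iff (MeasurableSet.iUnion hGm)]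
    exact hνfull
  -- the common a.e. equality set
  have hE : ∀ᵐ p ∂π, (f₁ p.1 + cTransform c f₁ p.2 = ((c p.1 p.2 : ℝ) : EReal))
      ∧ (f₂ p.1 + cTransform c f₂ p.2 = ((c p.1 p.2 : ℝ) : EReal)) :=
    (hf₁.2 π hπopt).and (hf₂.2 π hπopt)
  -- atoms
  have hy : ∀ j, ∃ y : Y, 0 < ν (G j) → G j = {y} := by
    intro j
    by_cases h : 0 < ν (G j)
    · exact (hsing j h).imp fun y hy => fun _ => hy
    · obtain ⟨y, -⟩ := nonempty_of_measure_ne_zero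
        (by rw [measure_univ]; exact one_ne_zero : ν (Set.univ : Set Y) ≠ 0)
      exact ⟨y, fun h' => absurd h' h⟩
  choose y₀ hy₀ using hy
  -- per-component constants
  have hkey : ∀ i, ∃ a : EReal, 0 < μ (F i) →
      ∀ᵐ x ∂(μ.restrict (F i)), f₁ x = f₂ x + a := by
    intro i
    by_cases hi : 0 < μ (F i)
    · have hm0 : μ (F i) ≠ 0 := hi.ne'
      have hm1 : μ (F i) ≠ ⊤ := measure_ne_top μ _
      have pot1 := restrict_kantorovich hπopt (hFm i) hm0 hm1 hf₁
      have pot2 := restrict_kantorovich hπopt (hFm i) hm0 hm1 hf₂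
      obtain ⟨a, ha⟩ := huniq i hi _ _ pot1 pot2
      refine ⟨a, fun _ => ?_⟩
      have hval : MeasurableEmbedding (Subtype.val : ↥(F i) → X) :=
        MeasurableEmbedding.subtype_coe (hFm i)
      have ha2 : ∀ᵐ x ∂(Measure.comap (Subtype.val : ↥(F i) → X) μ),
          f₁ x.1 = f₂ x.1 + a :=
        (Measure.ae_ennreal_smul_measure_iff (ENNReal.inv_ne_zero.2 hm1)).1 ha
      have hrw : μ.restrict (F i)
          = Measure.map Subtype.val (Measure.comap (Subtype.val : ↥(F i) → X) μ) := by
        rw [hval.map_comap, Subtype.range_coe]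
      rw [hrw, hval.ae_map_iff]
      exact ha2
    · exact ⟨0, fun h => absurd h hi⟩
  choose a ha using hkey
  -- π-version of the component constants
  have hπkey : ∀ i, 0 < μ (F i) → ∀ᵐ p ∂π, p.1 ∈ F i → f₁ p.1 = f₂ p.1 + a i := by
    intro i hi
    have hN : μ.restrict (F i) {x | ¬ (f₁ x = f₂ x + a i)} = 0 := ha i hi
    set N := toMeasurable (μ.restrict (F i)) {x | ¬ (f₁ x = f₂ x + a i)} with hNdef
    have hNm : MeasurableSet N := measurableSet_toMeasurable _ _
    have hN0 : μ.restrict (F i) N = 0 := by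
      rw [hNdef, measure_toMeasurable]; exact hN
    have hN0' : μ (N ∩ F i) = 0 := by
      rw [← Measure.restrict_apply hNm]; exact hN0
    have hπ0 : π ((N ∩ F i) ×ˢ (Set.univ : Set Y)) = 0 := by
      rw [coupling_fst hπopt.1 (hNm.inter (hFm i))]; exact hN0'
    have hπ0' : ∀ᵐ p ∂π, p ∉ (N ∩ F i) ×ˢ (Set.univ : Set Y) := by
      rw [ae_iff]
      refine measure_mono_null ?_ hπ0
      intro p hp
      simpa using hp
    filter_upwards [hπ0'] with p hp hpF
    by_contra hne
    exact hp ⟨⟨subset_toMeasurable _ _ hne, hpF⟩, trivial⟩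
  -- link constants across positive-mass cells
  set b : κ → EReal := fun j => cTransform c f₂ (y₀ j) - cTransform c f₁ (y₀ j) with hbdef
  have hlink : ∀ i j, 0 < μ (F i) → 0 < ν (G j) → π (F i ×ˢ G j) ≠ 0 → a i = b j := by
    intro i j hi hj hπij
    obtain ⟨p, hpmem, hpE, hpa⟩ := exists_mem_good π hπij (hE.and (hπkey i hi))
    have hp2 : p.2 = y₀ j := by
      have := hpmem.2
      rw [hy₀ j hj] at this
      exact this
    rw [hbdef]
    refine ereal_link (r := c p.1 p.2) ?_ ?_ (hpa hpmem.1) (hf₁.1.2.1 p.1) (hf₂.1.2.1 p.1)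
    · rw [← hp2]; exact hpE.1
    · rw [← hp2]; exact hpE.2
  -- there is a positive-mass component
  obtain ⟨i₀, hi₀⟩ : ∃ i, 0 < μ (F i) := by
    by_contra h
    push_neg at h
    have h0 : μ (⋃ i, F i) = 0 := by
      refine le_antisymm (le_trans (measure_iUnion_le _) ?_) (zero_le)
      have : ∀ i, μ (F i) = 0 := fun i => le_antisymm (h i) (zero_le)
      simp [this]
    rw [hμfull] at h0
    exact one_ne_zero h0
  by_cases hall : ∀ i, 0 < μ (F i) → a i = a i₀
  · -- all constants agree: conclude
    refine ⟨a i₀, ?_⟩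
    have hresti : ∀ i, μ ({x | ¬ (f₁ x = f₂ x + a i₀)} ∩ F i) = 0 := by
      intro i
      by_cases hi : 0 < μ (F i)
      · have := ha i hi
        rw [hall i hi] at this
        have h0 : μ.restrict (F i) {x | ¬ (f₁ x = f₂ x + a i₀)} = 0 := this
        rw [Measure.restrict_apply' (hFm i)] at h0
        exact h0
      · refine measure_mono_null (Set.inter_subset_right) ?_
        exact le_antisymm (not_lt.1 hi) (zero_le)
    rw [ae_iff]
    have hsub : {x | ¬ (f₁ x = f₂ x + a i₀)}
        ⊆ (⋃ i, F i)ᶜ ∪ ⋃ i, ({x | ¬ (f₁ x = f₂ x + a i₀)} ∩ F i) := by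
      intro x hx
      by_cases hxF : x ∈ ⋃ i, F i
      · obtain ⟨s, ⟨i, rfl⟩, hxs⟩ := hxF
        exact Or.inr (Set.mem_iUnion.2 ⟨i, hx, hxs⟩)
      · exact Or.inl hxF
    refine measure_mono_null hsub (measure_union_null hμcompl (measure_iUnion_null hresti))
  · -- otherwise π is degenerate
    exfalso
    push_neg at hall
    obtain ⟨i₁, hi₁, hne⟩ := hall
    apply hπnd
    set I' : Set ι := {i | 0 < μ (F i) ∧ a i = a i₀} with hI'def
    set J' : Set κ := {j | 0 < ν (G j) ∧ b j = a i₀} with hJ'def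
    have hi₀I : i₀ ∈ I' := ⟨hi₀, rfl⟩
    -- row identity
    have hrow : ∀ i : I', μ (F i.1) = ∑' j : J', π (F i.1 ×ˢ G j.1) := by
      intro i
      set A : Set Y := ⋃ j : J', G j.1 with hAdef
      have hAm : MeasurableSet A := MeasurableSet.iUnion (fun j => hGm j.1)
      have hzero : ∀ j, j ∉ J' → π (F i.1 ×ˢ G j) = 0 := by
        intro j hj
        by_cases hνj : 0 < ν (G j)
        · by_contra h0
          exact hj ⟨hνj, by rw [← hlink i.1 j i.2.1 hνj h0]; exact i.2.2⟩
        · refine le_antisymm ?_ (zero_le)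
          calc π (F i.1 ×ˢ G j) ≤ π ((Set.univ : Set X) ×ˢ G j) :=
                measure_mono (Set.prod_mono (Set.subset_univ _) le_rfl)
            _ = ν (G j) := coupling_snd hπopt.1 (hGm j)
            _ = 0 := le_antisymm (not_lt.1 hνj) (zero_le)
      have hnull1 : π ((Set.univ : Set X) ×ˢ (⋃ j, G j)ᶜ) = 0 := by
        rw [coupling_snd hπopt.1 (MeasurableSet.iUnion hGm).compl]; exact hνcompl
      have hnull2 : π (⋃ j : κ, (if j ∈ J' then (∅ : Set (X × Y)) else F i.1 ×ˢ G j)) = 0 := by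
        refine measure_iUnion_null fun j => ?_
        by_cases hj : j ∈ J'
        · simp [hj]
        · rw [if_neg hj]; exact hzero j hj
      have hdiff : π ((F i.1 ×ˢ (Set.univ : Set Y)) \ (F i.1 ×ˢ A)) = 0 := by
        refine measure_mono_null (fun p hp => ?_) (measure_union_null hnull1 hnull2)
        obtain ⟨hp1, hp2⟩ := hp
        have hp2' : p.2 ∉ A := fun hA => hp2 ⟨hp1.1, hA⟩
        by_cases hpG : p.2 ∈ ⋃ j, G j
        · obtain ⟨s, ⟨j, rfl⟩, hj2⟩ := hpG
          have hjJ : j ∉ J' := fun hjJ => hp2' (Set.mem_iUnion.2 ⟨⟨j, hjJ⟩, hj2⟩)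
          exact Or.inr (Set.mem_iUnion.2 ⟨j, by rw [if_neg hjJ]; exact ⟨hp1.1, hj2⟩⟩)
        · exact Or.inl ⟨trivial, hpG⟩
      have hinter : (F i.1 ×ˢ (Set.univ : Set Y)) ∩ (F i.1 ×ˢ A) = F i.1 ×ˢ A :=
        Set.inter_eq_self_of_subset_right (Set.prod_mono le_rfl (Set.subset_univ _))
      have hsplit := measure_inter_add_diff (μ := π) (F i.1 ×ˢ (Set.univ : Set Y))
        ((hFm i.1).prod hAm)
      rw [hinter, hdiff, add_zero] at hsplit
      have hdisjP : Pairwise fun (j j' : J') => Disjoint (F i.1 ×ˢ G j.1) (F i.1 ×ˢ G j'.1) := by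
        intro j j' hjj'
        rw [Set.disjoint_iff_inter_eq_empty, Set.prod_inter_prod,
          (hG.2.1 (Subtype.coe_injective.ne hjj')).inter_eq, Set.prod_empty]
      rw [← coupling_fst hπopt.1 (hFm i.1), ← hsplit, hAdef, Set.prod_iUnion]
      exact measure_iUnion hdisjP (fun j => (hFm i.1).prod (hGm j.1))
    -- column identity
    have hcol : ∀ j : J', ν (G j.1) = ∑' i : I', π (F i.1 ×ˢ G j.1) := by
      intro j
      set B : Set X := ⋃ i : I', F i.1 with hBdef
      have hBm : MeasurableSet B := MeasurableSet.iUnion (fun i => hFm i.1)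
      have hzero : ∀ i, i ∉ I' → π (F i ×ˢ G j.1) = 0 := by
        intro i hi
        by_cases hμi : 0 < μ (F i)
        · by_contra h0
          exact hi ⟨hμi, by rw [hlink i j.1 hμi j.2.1 h0]; exact j.2.2⟩
        · refine le_antisymm ?_ (zero_le)
          calc π (F i ×ˢ G j.1) ≤ π (F i ×ˢ (Set.univ : Set Y)) :=
                measure_mono (Set.prod_mono le_rfl (Set.subset_univ _))
            _ = μ (F i) := coupling_fst hπopt.1 (hFm i)
            _ = 0 := le_antisymm (not_lt.1 hμi) (zero_le)
      have hnull1 : π ((⋃ i, F i)ᶜ ×ˢ (Set.univ : Set Y)) = 0 := by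
        rw [coupling_fst hπopt.1 (MeasurableSet.iUnion hFm).compl]; exact hμcompl
      have hnull2 : π (⋃ i : ι, (if i ∈ I' then (∅ : Set (X × Y)) else F i ×ˢ G j.1)) = 0 := by
        refine measure_iUnion_null fun i => ?_
        by_cases hi : i ∈ I'
        · simp [hi]
        · rw [if_neg hi]; exact hzero i hi
      have hdiff : π (((Set.univ : Set X) ×ˢ G j.1) \ (B ×ˢ G j.1)) = 0 := by
        refine measure_mono_null (fun p hp => ?_) (measure_union_null hnull1 hnull2)
        obtain ⟨hp1, hp2⟩ := hp
        have hp1' : p.1 ∉ B := fun hB => hp2 ⟨hB, hp1.2⟩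
        by_cases hpF : p.1 ∈ ⋃ i, F i
        · obtain ⟨s, ⟨i, rfl⟩, hi2⟩ := hpF
          have hiI : i ∉ I' := fun hiI => hp1' (Set.mem_iUnion.2 ⟨⟨i, hiI⟩, hi2⟩)
          exact Or.inr (Set.mem_iUnion.2 ⟨i, by rw [if_neg hiI]; exact ⟨hi2, hp1.2⟩⟩)
        · exact Or.inl ⟨hpF, trivial⟩
      have hinter : ((Set.univ : Set X) ×ˢ G j.1) ∩ (B ×ˢ G j.1) = B ×ˢ G j.1 :=
        Set.inter_eq_self_of_subset_right (Set.prod_mono (Set.subset_univ _) le_rfl)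
      have hsplit := measure_inter_add_diff (μ := π) ((Set.univ : Set X) ×ˢ G j.1)
        (hBm.prod (hGm j.1))
      rw [hinter, hdiff, add_zero] at hsplit
      have hdisjP : Pairwise fun (i i' : I') => Disjoint (F i.1 ×ˢ G j.1) (F i'.1 ×ˢ G j.1) := by
        intro i i' hii'
        rw [Set.disjoint_iff_inter_eq_empty, Set.prod_inter_prod,
          (hF.2.1 (Subtype.coe_injective.ne hii')).inter_eq, Set.empty_prod]
      rw [← coupling_snd hπopt.1 (hGm j.1), ← hsplit, hBdef, Set.iUnion_prod_const]
      exact measure_iUnion hdisjP (fun i => (hFm i.1).prod (hGm j.1))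
    have heq2 : (∑' i : I', μ (F i.1)) = ∑' i : I', ∑' j : J', π (F i.1 ×ˢ G j.1) :=
      tsum_congr hrow
    have heq3 : (∑' i : I', ∑' j : J', π (F i.1 ×ˢ G j.1)) = ∑' j : J', ν (G j.1) := by
      rw [ENNReal.tsum_comm]
      exact tsum_congr fun j => (hcol j).symm
    refine ⟨I', J', ?_, heq2, heq3, ?_⟩
    · exact lt_of_lt_of_le hi₀ (ENNReal.le_tsum (⟨i₀, hi₀I⟩ : I'))
    · rw [← heq3, ← heq2]
      have hdisj : Pairwise fun (i i' : I') => Disjoint (F i.1) (F i'.1) := by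
        intro i i' hii'
        exact hF.2.1 (Subtype.coe_injective.ne hii')
      rw [← measure_iUnion hdisj (fun i => hFm i.1)]
      have hsub : (⋃ i : I', F i.1) ⊆ (F i₁)ᶜ := by
        refine Set.iUnion_subset fun i => ?_
        have hneq : i.1 ≠ i₁ := by
          intro h
          exact hne (h ▸ i.2.2)
        exact (hF.2.1 hneq).subset_compl_right
      calc μ (⋃ i : I', F i.1) ≤ μ ((F i₁)ᶜ) := measure_mono hsub
        _ = 1 - μ (F i₁) := prob_compl_eq_one_sub (hFm i₁)
        _ < 1 := ENNReal.sub_lt_self ENNReal.one_ne_top one_ne_zero hi₁.ne'
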